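/- Let D ≥ 3 be an integer, set x_c = 1/(4(D−1)), and let x be a real number with x ≥ x_c. Then the series ∑_{L=1}^∞ catalan(L−1)/(16·x·(D−1))^L converges, and 8·√(D·x) · ∑_{L=1}^∞ catalan(L−1)/(16·x·(D−1))^L = 4·√D·(√x − √(x − x_c)). -/

import Mathlib

open Finset

lemma cat_partial (n : ℕ) :
    ∑ k ∈ range n, (catalan k : ℝ) / 4 ^ (k + 1)
      = 1 / 2 - (Nat.centralBinom n : ℝ) / (2 * 4 ^ n) := by
  induction n with
  | zero => simp [Nat.centralBinom_zero]
  | succ n ih =>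
    rw [Finset.sum_range_succ, ih]
    have hcb : ((n : ℝ) + 1) * Nat.centralBinom (n + 1)
        = 2 * (2 * n + 1) * Nat.centralBinom n := by
      exact_mod_cast Nat.succ_mul_centralBinom_succ n
    have hcat : ((n : ℝ) + 1) * catalan n = Nat.centralBinom n := by
      exact_mod_cast congrArg (Nat.cast : ℕ → ℝ) (succ_mul_catalan_eq_centralBinom n)
    have hn1 : ((n : ℝ) + 1) ≠ 0 := by positivity
    have key : (catalan n : ℝ) / 4 ^ (n + 1)
        = (Nat.centralBinom n : ℝ) / (2 * 4 ^ n)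
          - (Nat.centralBinom (n + 1) : ℝ) / (2 * 4 ^ (n + 1)) := by
      rw [pow_succ]
      field_simp
      refine mul_left_cancel₀ hn1 ?_
      linear_combination 2 * hcat + hcb
    rw [key]; ring

lemma cat_range_le {A : ℝ} (h0 : 0 ≤ A) (h4 : A ≤ 1 / 4) (n : ℕ) :
    ∑ k ∈ range n, (catalan k : ℝ) * A ^ (k + 1) ≤ 1 / 2 := by
  calc ∑ k ∈ range n, (catalan k : ℝ) * A ^ (k + 1)
      ≤ ∑ k ∈ range n, (catalan k : ℝ) / 4 ^ (k + 1) := by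
        refine Finset.sum_le_sum fun k _ => ?_
        rw [div_eq_mul_inv, ← inv_pow]
        refine mul_le_mul_of_nonneg_left (pow_le_pow_left₀ h0 ?_ _) (by positivity)
        rw [show ((4:ℝ))⁻¹ = 1/4 by norm_num]; exact h4
    _ = 1 / 2 - (Nat.centralBinom n : ℝ) / (2 * 4 ^ n) := cat_partial n
    _ ≤ 1 / 2 := by
        have : (0:ℝ) ≤ (Nat.centralBinom n : ℝ) / (2 * 4 ^ n) := by positivity
        linarith

lemma cat_summable {A : ℝ} (h0 : 0 ≤ A) (h4 : A ≤ 1 / 4) :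
    Summable (fun k : ℕ => (catalan k : ℝ) * A ^ (k + 1)) :=
  summable_of_sum_range_le (fun n => by positivity) (cat_range_le h0 h4)

lemma cat_tsum {A : ℝ} (h0 : 0 ≤ A) (h4 : A ≤ 1 / 4) :
    ∑' k : ℕ, (catalan k : ℝ) * A ^ (k + 1) = (1 - Real.sqrt (1 - 4 * A)) / 2 := by
  set f := ∑' k : ℕ, (catalan k : ℝ) * A ^ (k + 1) with hf
  have hsum := cat_summable h0 h4
  have hle : f ≤ 1 / 2 :=
    Real.tsum_le_of_sum_range_le (fun n => by positivity) (cat_range_le h0 h4)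
  have hnorm : Summable (fun k : ℕ => ‖(catalan k : ℝ) * A ^ (k + 1)‖) := by
    refine hsum.congr fun k => ?_
    rw [Real.norm_eq_abs, abs_of_nonneg (by positivity)]
  have hcauchy : f * f = ∑' n : ℕ, ∑ ij ∈ antidiagonal n,
      ((catalan ij.1 : ℝ) * A ^ (ij.1 + 1)) * ((catalan ij.2 : ℝ) * A ^ (ij.2 + 1)) :=
    tsum_mul_tsum_eq_tsum_sum_antidiagonal_of_summable_norm hnorm hnorm
  have hinner : ∀ n : ℕ, ∑ ij ∈ antidiagonal n,
      ((catalan ij.1 : ℝ) * A ^ (ij.1 + 1)) * ((catalan ij.2 : ℝ) * A ^ (ij.2 + 1))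
      = (catalan (n + 1) : ℝ) * A ^ (n + 2) := by
    intro n
    rw [catalan_succ' n]
    push_cast
    rw [Finset.sum_mul]
    refine Finset.sum_congr rfl fun ij hij => ?_
    have h := Finset.HasAntidiagonal.mem_antidiagonal.mp hij
    have : ij.1 + 1 + (ij.2 + 1) = n + 2 := by omega
    rw [show ((catalan ij.1 : ℝ) * A ^ (ij.1 + 1)) * ((catalan ij.2 : ℝ) * A ^ (ij.2 + 1))
        = (catalan ij.1 : ℝ) * (catalan ij.2 : ℝ) * (A ^ (ij.1 + 1) * A ^ (ij.2 + 1)) by ring,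
      ← pow_add, this]
  have hshift : f = (catalan 0 : ℝ) * A ^ 1 + ∑' n : ℕ, (catalan (n + 1) : ℝ) * A ^ (n + 2) := by
    rw [hf, hsum.tsum_eq_zero_add]
  have hquad : f * f = f - A := by
    rw [hcauchy, tsum_congr hinner]
    have : ∑' n : ℕ, (catalan (n + 1) : ℝ) * A ^ (n + 2) = f - A := by
      rw [hshift]; simp [catalan_zero]
    rw [this]
  have hsq : (1 - 2 * f) ^ 2 = 1 - 4 * A := by nlinarith [hquad]
  have h1 : Real.sqrt (1 - 4 * A) = 1 - 2 * f := by
    rw [← hsq, Real.sqrt_sq (by linarith)]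
  rw [h1]; ring

/-- Resummation of the cherry-tree series: for an integer `D ≥ 3`,
`x_c = 1/(4(D-1))` and `x ≥ x_c`, the series `∑_{L≥1} catalan(L-1)/(16x(D-1))^L`
(here indexed by `L = k+1`, `k ≥ 0`) converges and
`8√(Dx)·∑ = 4√D·(√x - √(x - x_c))`. -/
theorem cherry_tree_resummation (D : ℕ) (hD : 3 ≤ D) (x : ℝ)
    (hx : 1 / (4 * ((D : ℝ) - 1)) ≤ x) :
    Summable (fun k : ℕ => (catalan k : ℝ) / (16 * x * ((D : ℝ) - 1)) ^ (k + 1)) ∧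
    8 * Real.sqrt ((D : ℝ) * x) *
        ∑' k : ℕ, (catalan k : ℝ) / (16 * x * ((D : ℝ) - 1)) ^ (k + 1)
      = 4 * Real.sqrt (D : ℝ) *
          (Real.sqrt x - Real.sqrt (x - 1 / (4 * ((D : ℝ) - 1)))) := by
  have hD3 : (3:ℝ) ≤ (D:ℝ) := by exact_mod_cast hD
  have hDm : (2:ℝ) ≤ (D:ℝ) - 1 := by linarith
  have hDm0 : (0:ℝ) < (D:ℝ) - 1 := by linarith
  have hxc : (0:ℝ) < 1 / (4 * ((D:ℝ) - 1)) := by positivity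
  have hx0 : 0 < x := lt_of_lt_of_le hxc hx
  set B : ℝ := 16 * x * ((D:ℝ) - 1) with hB
  have hB0 : 0 < B := by positivity
  set A : ℝ := B⁻¹ with hA
  have hA0 : 0 ≤ A := by positivity
  have hB4 : (4:ℝ) ≤ B := by
    have : 1 ≤ 4 * ((D:ℝ) - 1) * x := by
      rw [div_le_iff₀ (by positivity)] at hx; linarith
    rw [hB]; nlinarith
  have hA4 : A ≤ 1 / 4 := by
    rw [hA, inv_eq_one_div]
    exact one_div_le_one_div_of_le (by norm_num) hB4
  have heq : (fun k : ℕ => (catalan k : ℝ) / B ^ (k + 1))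
      = fun k : ℕ => (catalan k : ℝ) * A ^ (k + 1) := by
    funext k; rw [hA, div_eq_mul_inv, inv_pow]
  constructor
  · rw [heq]; exact cat_summable hA0 hA4
  · rw [heq, cat_tsum hA0 hA4]
    have h4Ax : 4 * A * x = 1 / (4 * ((D:ℝ) - 1)) := by
      rw [hA, hB]; field_simp; ring
    have h14A : 0 ≤ 1 - 4 * A := by linarith
    have hsDx : Real.sqrt ((D:ℝ) * x) = Real.sqrt (D:ℝ) * Real.sqrt x :=
      Real.sqrt_mul (by positivity) x
    have hsplit : Real.sqrt x * Real.sqrt (1 - 4 * A)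
        = Real.sqrt (x - 1 / (4 * ((D:ℝ) - 1))) := by
      rw [← Real.sqrt_mul hx0.le]
      congr 1
      rw [← h4Ax]; ring
    rw [hsDx]
    nlinarith [hsplit, Real.sqrt_nonneg (D:ℝ), Real.sqrt_nonneg x,
      Real.sqrt_nonneg (1 - 4 * A)]
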